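/- Fix p ∈ (0,1) and λ ∈ ℝ. For each integer n ≥ 2 let P_n denote the Poisson distribution with mean −n·log(p). Then lim_{n→∞} (1/n)·log( Σ_{j=0}^∞ P_n({j})·exp(n·λ·j·log(1−1/n)) ) = −log(p)·(exp(−λ) − 1). (This is the scaled log-Laplace transform of log(p̂^{n,1}) = J^{n,1}·log(1−1/n) evaluated at nλ, and its limit Λ(λ).) -/

import Mathlib

open Filter

/-- The scaled log-Laplace transform of `log p̂^{n,1} = J^{n,1}·log(1−1/n)` at `nλ`,
where `J^{n,1}` is Poisson with mean `−n log p`, converges to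
`Λ(λ) = −log(p)·(exp(−λ) − 1)`. -/
theorem tendsto_scaled_logLaplace_AMS_k_one (p l : ℝ) (hp : p ∈ Set.Ioo (0 : ℝ) 1) :
    Tendsto (fun n : ℕ =>
      (1 / (n : ℝ)) * Real.log (∑' j : ℕ,
        Real.exp (-(-(n : ℝ) * Real.log p)) * (-(n : ℝ) * Real.log p) ^ j /
          (Nat.factorial j) *
        Real.exp ((n : ℝ) * l * (j : ℝ) * Real.log (1 - 1 / (n : ℝ)))))
      atTop (nhds (-Real.log p * (Real.exp (-l) - 1))) := by
  have key : ∀ n : ℕ, 1 ≤ n →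
      (1 / (n : ℝ)) * Real.log (∑' j : ℕ,
        Real.exp (-(-(n : ℝ) * Real.log p)) * (-(n : ℝ) * Real.log p) ^ j /
          (Nat.factorial j) *
        Real.exp ((n : ℝ) * l * (j : ℝ) * Real.log (1 - 1 / (n : ℝ))))
      = -Real.log p *
          (Real.exp ((n : ℝ) * Real.log (1 - 1 / (n : ℝ)) * l) - 1) := by
    intro n hn
    have hn0 : (n : ℝ) ≠ 0 := by positivity
    set μ : ℝ := -(n : ℝ) * Real.log p with hμ
    set c : ℝ := (n : ℝ) * l * Real.log (1 - 1 / (n : ℝ)) with hc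
    have hterm : ∀ j : ℕ,
        Real.exp (-μ) * μ ^ j / (Nat.factorial j) *
          Real.exp ((n : ℝ) * l * (j : ℝ) * Real.log (1 - 1 / (n : ℝ)))
        = Real.exp (-μ) * ((μ * Real.exp c) ^ j / (Nat.factorial j)) := by
      intro j
      have : (n : ℝ) * l * (j : ℝ) * Real.log (1 - 1 / (n : ℝ)) = (j : ℝ) * c := by
        rw [hc]; ring
      rw [this, Real.exp_nat_mul, mul_pow]
      ring
    have hsum : (∑' j : ℕ, Real.exp (-μ) * μ ^ j / (Nat.factorial j) *
          Real.exp ((n : ℝ) * l * (j : ℝ) * Real.log (1 - 1 / (n : ℝ))))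
        = Real.exp (-μ) * Real.exp (μ * Real.exp c) := by
      rw [tsum_congr hterm, tsum_mul_left]
      congr 1
      rw [Real.exp_eq_exp_ℝ, NormedSpace.exp_eq_tsum_div]
    rw [hsum, ← Real.exp_add, Real.log_exp]
    rw [hμ, hc]
    field_simp
    ring
  have hlim : Tendsto (fun n : ℕ => (n : ℝ) * Real.log (1 - 1 / (n : ℝ)))
      atTop (nhds (-1)) := by
    have := (Real.tendsto_mul_log_one_add_div_atTop (-1)).comp
      (tendsto_natCast_atTop_atTop (R := ℝ))
    simpa [Function.comp_def, sub_eq_add_neg, neg_div] using this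
  have h2 : Tendsto (fun n : ℕ => -Real.log p *
      (Real.exp ((n : ℝ) * Real.log (1 - 1 / (n : ℝ)) * l) - 1))
      atTop (nhds (-Real.log p * (Real.exp (-l) - 1))) := by
    refine Tendsto.const_mul _ (Tendsto.sub_const ?_ 1)
    have : Tendsto (fun n : ℕ => (n : ℝ) * Real.log (1 - 1 / (n : ℝ)) * l)
        atTop (nhds (-1 * l)) := hlim.mul_const l
    simpa [neg_one_mul, Function.comp_def] using (Real.continuous_exp.tendsto _).comp this
  refine h2.congr' ?_
  filter_upwards [eventually_ge_atTop 1] with n hn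
  exact (key n hn).symm
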